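/- For any square-summable sequences a, b: ℤ → ℝ and Δx > 0, one has ⟨a, D(ab)⟩ = ⟨D₊(b), (a·𝒮⁺a)/2⟩, where D is the centered difference, D₊ the forward difference, and (a·𝒮⁺a)_j = a_j a_{j+1}. -/

import Mathlib

noncomputable section
def Dp (Δx : ℝ) (a : ℤ → ℝ) : ℤ → ℝ := fun j => (a (j + 1) - a j) / Δx
def Dc (Δx : ℝ) (a : ℤ → ℝ) : ℤ → ℝ := fun j => (a (j + 1) - a (j - 1)) / (2 * Δx)
def ip (Δx : ℝ) (u v : ℤ → ℝ) : ℝ := Δx * ∑' j : ℤ, u j * v j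

/-- `⟨a, D(ab)⟩ = ⟨D₊(b), (a·𝒮⁺a)/2⟩`. -/
theorem stmt11 (Δx : ℝ) (hΔx : 0 < Δx) (a b : ℤ → ℝ)
    (ha : Summable fun j : ℤ => (a j) ^ 2) (hb : Summable fun j : ℤ => (b j) ^ 2) :
    ip Δx a (Dc Δx (fun i => a i * b i)) = ip Δx (Dp Δx b) (fun j => a j * a (j + 1) / 2) := by
  have hΔ : (Δx : ℝ) ≠ 0 := ne_of_gt hΔx
  set M := ∑' j : ℤ, b j ^ 2 with hMdef
  have hbM : ∀ j, |b j| ≤ Real.sqrt M := by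
    intro j
    rw [← Real.sqrt_sq_eq_abs]
    exact Real.sqrt_le_sqrt (Summable.le_tsum hb j fun i _ => sq_nonneg _)
  have ha1 : Summable fun j : ℤ => a (j + 1) ^ 2 := by
    have := (Equiv.addRight (1 : ℤ)).summable_iff (f := fun j : ℤ => a j ^ 2)
    exact this.2 ha
  have key : ∀ c : ℤ → ℝ, (∀ j, |c j| ≤ Real.sqrt M) →
      Summable fun j : ℤ => a j * a (j + 1) * c j := by
    intro c hc
    have hbound : ∀ j : ℤ, |a j * a (j + 1) * c j| ≤ Real.sqrt M * ((a j ^ 2 + a (j + 1) ^ 2) / 2) := by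
      intro j
      rw [abs_mul]
      have h1 : |a j * a (j + 1)| ≤ (a j ^ 2 + a (j + 1) ^ 2) / 2 := by
        rw [abs_mul]
        nlinarith [sq_nonneg (|a j| - |a (j + 1)|), sq_abs (a j), sq_abs (a (j + 1))]
      have h2 := hc j
      have h3 : (0:ℝ) ≤ |a j * a (j + 1)| := abs_nonneg _
      have h4 : (0:ℝ) ≤ |c j| := abs_nonneg _
      nlinarith [Real.sqrt_nonneg M]
    have hgsum : Summable fun j : ℤ => Real.sqrt M * ((a j ^ 2 + a (j + 1) ^ 2) / 2) :=
      ((ha.add ha1).div_const 2).mul_left _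
    exact Summable.of_abs (Summable.of_nonneg_of_le (fun j => abs_nonneg _) hbound hgsum)
  set f : ℤ → ℝ := fun j => a j * a (j + 1) * b (j + 1) with hfdef
  set g : ℤ → ℝ := fun j => a j * a (j + 1) * b j with hgdef
  set h : ℤ → ℝ := fun j => a j * a (j - 1) * b (j - 1) with hhdef
  have hf : Summable f := key (fun j => b (j + 1)) (fun j => hbM (j + 1))
  have hg : Summable g := key b hbM
  have hgh : ∀ j : ℤ, h (j + 1) = g j := by
    intro j
    simp only [hhdef, hgdef, add_sub_cancel_right]
    ring
  have hh : Summable h := by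
    have := ((Equiv.addRight (1 : ℤ)).summable_iff (f := h))
    apply this.1
    apply Summable.congr hg
    intro j
    simpa using (hgh j).symm
  have hsum_h : ∑' j : ℤ, h j = ∑' j : ℤ, g j := by
    have := (Equiv.addRight (1 : ℤ)).tsum_eq h
    rw [← this]
    exact tsum_congr fun j => by simpa using hgh j
  have lhs_eq : ∑' j : ℤ, a j * Dc Δx (fun i => a i * b i) j
      = (∑' j : ℤ, f j - ∑' j : ℤ, h j) / (2 * Δx) := by
    rw [← Summable.tsum_sub hf hh, ← tsum_div_const]
    apply tsum_congr
    intro j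
    simp only [Dc, hfdef, hhdef]
    ring
  have rhs_eq : ∑' j : ℤ, Dp Δx b j * (a j * a (j + 1) / 2)
      = (∑' j : ℤ, f j - ∑' j : ℤ, g j) / (2 * Δx) := by
    rw [← Summable.tsum_sub hf hg, ← tsum_div_const]
    apply tsum_congr
    intro j
    simp only [Dp, hfdef, hgdef]
    field_simp
  simp only [ip, lhs_eq, rhs_eq, hsum_h]
end
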